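/- Let f = x₂ and J = J_{x₂} on ℝ⁴. For each integer n ≥ 1 set s_n = √(n-1)/n, t_n = -1/n and α_n = t_n e^{s_n x₁ + t_n y₁} β - s_n e^{s_n x₁ + t_n y₁} γ. Then each α_n is a closed J-anti-invariant 2-form on ℝ⁴, for every m ≥ 1 the forms α₁, …, α_m are linearly independent over ℝ, and consequently the real vector space of closed J-anti-invariant 2-forms on ℝ⁴ is infinite-dimensional. -/

import Mathlib

noncomputable section

/-- ℝ⁴ with coordinates (x₁, x₂, y₁, y₂) indexed by 0, 1, 2, 3. -/
abbrev E4 : Type := Fin 4 → ℝ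

/-- Partial derivative of `g` in the `i`-th coordinate direction at `p`. -/
def pd (i : Fin 4) (g : E4 → ℝ) (p : E4) : ℝ := fderiv ℝ g p (Pi.single i 1)

/-- Lie bracket of vector fields on ℝ⁴. -/
def lieBracket (X Y : E4 → E4) (p : E4) : E4 :=
  fderiv ℝ Y p (X p) - fderiv ℝ X p (Y p)

/-- Nijenhuis tensor `N_J(X,Y) = [JX,JY] - [X,Y] - J[JX,Y] - J[X,JY]`. -/
def nijenhuis (J : E4 → E4 → E4) (X Y : E4 → E4) (p : E4) : E4 :=
  lieBracket (fun x => J x (X x)) (fun x => J x (Y x)) p - lieBracket X Y p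
    - J p (lieBracket (fun x => J x (X x)) Y p)
    - J p (lieBracket X (fun x => J x (Y x)) p)

/-- The almost complex structure `J_f` on ℝ⁴:
`J_f ∂x₁ = f ∂x₂ + ∂y₁`, `J_f ∂x₂ = ∂y₂`, `J_f ∂y₁ = -∂x₁ - f ∂y₂`, `J_f ∂y₂ = -∂x₂`. -/
def Jf (f : E4 → ℝ) (p : E4) (v : E4) : E4 :=
  ![-(v 2), f p * v 0 - v 3, v 0, v 1 - f p * v 2]

/-- Exterior derivative of a 2-form on ℝ⁴ (given as a point-dependent bilinear form). -/
def extDeriv2 (ω : E4 → E4 → E4 → ℝ) (p u v w : E4) : ℝ :=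
  fderiv ℝ (fun x => ω x v w) p u - fderiv ℝ (fun x => ω x u w) p v
    + fderiv ℝ (fun x => ω x u v) p w

/-- A 2-form on ℝ⁴ is closed when its exterior derivative vanishes everywhere. -/
def IsClosed2 (ω : E4 → E4 → E4 → ℝ) : Prop := ∀ p u v w : E4, extDeriv2 ω p u v w = 0

/-- The 2-form `β = dx₁∧dx₂ - f dx₁∧dy₁ - dy₁∧dy₂`. -/
def betaF (f : E4 → ℝ) (p u v : E4) : ℝ :=
  (u 0 * v 1 - u 1 * v 0) - f p * (u 0 * v 2 - u 2 * v 0) - (u 2 * v 3 - u 3 * v 2)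

/-- The 2-form `γ = dx₁∧dy₂ - dx₂∧dy₁`. -/
def gammaF (p u v : E4) : ℝ :=
  (u 0 * v 3 - u 3 * v 0) - (u 1 * v 2 - u 2 * v 1)

/-- System (★) for the pair `(a, b)`:
`a_{y₁} - b_{x₁} + (fa)_{x₂} = 0`, `a_{x₁} + b_{y₁} + (fa)_{y₂} = 0`,
`a_{y₂} - b_{x₂} = 0`, `a_{x₂} + b_{y₂} = 0`. -/
def StarSystem (f a b : E4 → ℝ) : Prop :=
  (∀ p : E4, pd 2 a p - pd 0 b p + pd 1 (fun x => f x * a x) p = 0) ∧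
  (∀ p : E4, pd 0 a p + pd 2 b p + pd 3 (fun x => f x * a x) p = 0) ∧
  (∀ p : E4, pd 3 a p - pd 1 b p = 0) ∧
  (∀ p : E4, pd 1 a p + pd 3 b p = 0)

/-- The closed anti-invariant forms
`α_n = t_n e^{s_n x₁ + t_n y₁} β - s_n e^{s_n x₁ + t_n y₁} γ`
for `J = J_{x₂}`, where `s_n = √(n-1)/n` and `t_n = -1/n`. -/
def alphaN (n : ℕ) (p u v : E4) : ℝ :=
  (-1 / n) * Real.exp (Real.sqrt ((n : ℝ) - 1) / n * p 0 + (-1 / n) * p 2)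
      * betaF (fun x => x 1) p u v
    - Real.sqrt ((n : ℝ) - 1) / n
        * Real.exp (Real.sqrt ((n : ℝ) - 1) / n * p 0 + (-1 / n) * p 2) * gammaF p u v

/-- A 2-form is `J_{x₂}`-anti-invariant. -/
def IsAntiInvariantJx2 (α : E4 → E4 → E4 → ℝ) : Prop :=
  ∀ p u v : E4, α p (Jf (fun x => x 1) p u) (Jf (fun x => x 1) p v) = -α p u v


open ContinuousLinearMap in
lemma fderiv_exp_lin (s t c1 c2 : ℝ) (p w : E4) :
    fderiv ℝ (fun x : E4 => Real.exp (s * x 0 + t * x 2) * (c1 + c2 * x 1)) p w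
      = Real.exp (s * p 0 + t * p 2) *
          ((c1 + c2 * p 1) * (s * w 0 + t * w 2) + c2 * w 1) := by
  have h0 : HasFDerivAt (fun x : E4 => x 0)
      (ContinuousLinearMap.proj 0 : E4 →L[ℝ] ℝ) p :=
    (ContinuousLinearMap.proj 0 : E4 →L[ℝ] ℝ).hasFDerivAt
  have h2 : HasFDerivAt (fun x : E4 => x 2)
      (ContinuousLinearMap.proj 2 : E4 →L[ℝ] ℝ) p :=
    (ContinuousLinearMap.proj 2 : E4 →L[ℝ] ℝ).hasFDerivAt
  have h1 : HasFDerivAt (fun x : E4 => x 1)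
      (ContinuousLinearMap.proj 1 : E4 →L[ℝ] ℝ) p :=
    (ContinuousLinearMap.proj 1 : E4 →L[ℝ] ℝ).hasFDerivAt
  have hexp := ((h0.const_mul s).add (h2.const_mul t)).exp
  have haff := (hasFDerivAt_const c1 p).add (h1.const_mul c2)
  have hmul := hexp.mul haff
  rw [show fderiv ℝ (fun x : E4 => Real.exp (s * x 0 + t * x 2) * (c1 + c2 * x 1)) p = _ from
    hmul.fderiv]
  simp [ContinuousLinearMap.add_apply, ContinuousLinearMap.smul_apply,
    ContinuousLinearMap.proj_apply, smul_eq_mul]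
  ring

lemma alphaN_closed (n : ℕ) (hn : 1 ≤ n) : IsClosed2 (alphaN n) := by
  intro p u v w
  set s : ℝ := Real.sqrt ((n : ℝ) - 1) / n with hsdef
  set t : ℝ := -1 / (n : ℝ) with htdef
  have key : ∀ a b : E4, (fun x => alphaN n x a b) = fun x : E4 =>
      Real.exp (s * x 0 + t * x 2) *
        ((t * ((a 0 * b 1 - a 1 * b 0) - (a 2 * b 3 - a 3 * b 2))
            - s * ((a 0 * b 3 - a 3 * b 0) - (a 1 * b 2 - a 2 * b 1)))
          + (-t * (a 0 * b 2 - a 2 * b 0)) * x 1) := by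
    intro a b; funext x
    simp only [alphaN, betaF, gammaF, hsdef, htdef]
    ring
  have hn0 : (n : ℝ) ≠ 0 := Nat.cast_ne_zero.mpr (by omega)
  have h1 : Real.sqrt ((n : ℝ) - 1) ^ 2 = (n : ℝ) - 1 :=
    Real.sq_sqrt (by
      have h : (1:ℝ) ≤ n := by exact_mod_cast hn
      linarith)
  have hs : s ^ 2 + t ^ 2 + t = 0 := by
    rw [hsdef, htdef, div_pow, h1]
    field_simp
    ring
  unfold extDeriv2
  rw [key v w, key u w, key u v, fderiv_exp_lin, fderiv_exp_lin, fderiv_exp_lin]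
  linear_combination (Real.exp (s * p 0 + t * p 2) *
    (u 0 * (v 1 * w 2 - v 2 * w 1) - v 0 * (u 1 * w 2 - u 2 * w 1)
      + w 0 * (u 1 * v 2 - u 2 * v 1))) * hs

lemma alphaN_anti (n : ℕ) : IsAntiInvariantJx2 (alphaN n) := by
  intro p u v
  simp only [alphaN, betaF, gammaF, Jf, Matrix.cons_val_zero, Matrix.cons_val_one,
    Matrix.head_cons, Matrix.cons_val_two, Matrix.tail_cons, Matrix.cons_val_three]
  ring

lemma coeff_zero_of_exp_sum (m : ℕ) (c : Fin m → ℝ)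
    (h : ∀ y : ℝ, ∑ i : Fin m, c i * Real.exp (-1 / (i.1 + 1 : ℝ) * y) = 0) :
    ∀ i, c i = 0 := by
  classical
  set N := Nat.factorial m with hN
  have hdvd : ∀ i : Fin m, (i.1 + 1) ∣ N := fun i =>
    Nat.dvd_factorial (Nat.succ_pos _) i.2
  set d : Fin m → ℕ := fun i => N / (i.1 + 1) with hd
  have hdm : ∀ i, d i * (i.1 + 1) = N := fun i => Nat.div_mul_cancel (hdvd i)
  have hNpos : 0 < N := Nat.factorial_pos m
  have hdpos : ∀ i, 0 < d i := by
    intro i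
    rcases Nat.eq_zero_or_pos (d i) with h0 | h0
    · exfalso; have := hdm i; rw [h0, zero_mul] at this; omega
    · exact h0
  have hdinj : Function.Injective d := by
    intro i j hij
    have hi := hdm i
    rw [hij] at hi
    have hj := hdm j
    have : i.1 + 1 = j.1 + 1 := Nat.eq_of_mul_eq_mul_left (hdpos j) (by rw [hi, hj])
    exact Fin.ext (by omega)
  set P : Polynomial ℝ := ∑ i : Fin m, Polynomial.monomial (d i) (c i) with hP
  have heval : ∀ r : ℝ, 0 < r → P.eval r = 0 := by
    intro r hr
    have hy := h (-(N : ℝ) * Real.log r)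
    rw [hP, Polynomial.eval_finset_sum, ← hy]
    refine Finset.sum_congr rfl (fun i _ => ?_)
    rw [Polynomial.eval_monomial]
    congr 1
    have hcast : ((i.1 : ℝ) + 1) ≠ 0 := by positivity
    have hNd : (N : ℝ) = (d i : ℝ) * ((i.1 : ℝ) + 1) := by
      exact_mod_cast congrArg (Nat.cast (R := ℝ)) (hdm i).symm
    have heq : -1 / ((i.1 : ℝ) + 1) * (-(N : ℝ) * Real.log r)
        = (d i : ℝ) * Real.log r := by
      rw [hNd]; field_simp
    rw [heq, Real.exp_nat_mul, Real.exp_log hr]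
  have hP0 : P = 0 := by
    apply Polynomial.eq_zero_of_infinite_isRoot
    apply Set.Infinite.mono (s := Set.Ioi (0:ℝ))
    · intro r hr; exact heval r hr
    · exact Set.Ioi_infinite 0
  intro i
  have hco := congrArg (fun q => Polynomial.coeff q (d i)) hP0
  simp only [hP, Polynomial.finset_sum_coeff, Polynomial.coeff_monomial,
    Polynomial.coeff_zero] at hco
  rw [Finset.sum_eq_single i (fun j _ hji => if_neg (fun hdd => hji (hdinj hdd)))
    (fun hni => absurd (Finset.mem_univ i) hni)] at hco
  simpa using hco

lemma alphaN_li (m : ℕ) :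
    LinearIndependent ℝ (fun i : Fin m => alphaN (i.1 + 1)) := by
  rw [Fintype.linearIndependent_iff]
  intro g hg i
  have key : ∀ y : ℝ, ∑ j : Fin m,
      (g j * (-1 / (j.1 + 1 : ℝ))) * Real.exp (-1 / (j.1 + 1 : ℝ) * y) = 0 := by
    intro y
    have h0 := congrFun (congrFun (congrFun hg (Pi.single 2 y))
      (Pi.single 0 1)) (Pi.single 1 1)
    simp only [Finset.sum_apply, Pi.smul_apply, smul_eq_mul, Pi.zero_apply] at h0
    rw [← h0]
    refine Finset.sum_congr rfl (fun j _ => ?_)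
    have e1 : betaF (fun x => x 1) (Pi.single 2 y) (Pi.single 0 1) (Pi.single 1 1) = 1 := by
      simp [betaF, Pi.single_apply]
    have e2 : gammaF (Pi.single 2 y) (Pi.single 0 1) (Pi.single 1 1) = 0 := by
      simp [gammaF, Pi.single_apply]
    have e3 : (Pi.single 2 y : E4) 0 = 0 := by simp [Pi.single_apply]
    have e4 : (Pi.single 2 y : E4) 2 = y := by simp [Pi.single_apply]
    rw [alphaN, e1, e2, e3, e4]
    push_cast
    ring
  have hc := coeff_zero_of_exp_sum m _ key i
  have hne : (-1 / (i.1 + 1 : ℝ)) ≠ 0 := by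
    apply div_ne_zero <;> [norm_num; positivity]
  rcases mul_eq_zero.mp hc with h | h
  · exact h
  · exact absurd h hne


/-- Let `f = x₂` and `J = J_{x₂}` on ℝ⁴.  For `n ≥ 1` set `s_n = √(n-1)/n`,
`t_n = -1/n` and `α_n = t_n e^{s_n x₁ + t_n y₁} β - s_n e^{s_n x₁ + t_n y₁} γ`.  Then each
`α_n` is a closed `J`-anti-invariant 2-form on ℝ⁴, for every `m ≥ 1` the forms
`α₁, …, α_m` are linearly independent over ℝ, and consequently the real vector space of
closed `J`-anti-invariant 2-forms on ℝ⁴ is infinite-dimensional (it contains families of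
linearly independent vectors of arbitrary finite cardinality). -/
theorem alphaN_closed_antiInvariant_linearIndependent :
    (∀ n : ℕ, 1 ≤ n → IsClosed2 (alphaN n) ∧ IsAntiInvariantJx2 (alphaN n)) ∧
    (∀ m : ℕ, 1 ≤ m →
      LinearIndependent ℝ (fun i : Fin m => alphaN (i.1 + 1))) ∧
    (∀ m : ℕ, ∃ A : Fin m → (E4 → E4 → E4 → ℝ),
      (∀ i, IsClosed2 (A i) ∧ IsAntiInvariantJx2 (A i)) ∧ LinearIndependent ℝ A) :=
  ⟨fun n hn => ⟨alphaN_closed n hn, alphaN_anti n⟩,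
   fun m _ => alphaN_li m,
   fun m => ⟨fun i => alphaN (i.1 + 1),
     fun i => ⟨alphaN_closed (i.1 + 1) (Nat.le_add_left 1 i.1), alphaN_anti (i.1 + 1)⟩,
     alphaN_li m⟩⟩
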